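/- For every z = (z₁,…,z_p) ∈ ℝ^p, the function f : ℝ → ℝ defined by f(s) := m̃_p(z₁+s, …, z_p+s) is differentiable on ℝ and satisfies 1 ≤ f′(s) ≤ 3 for every s ∈ ℝ. -/

import Mathlib

open Classical in
/-- The regularized max-min function `m̃_p`: with `M(z) = max_j z_j` and `m(z) = min_j z_j`,
`m̃_p(z) = ½(M+m) + ½(M−m)·χ((M+m)/(M−m))` when `M > m`, and `m̃_p(z) = z₁` when all
coordinates are equal. -/
noncomputable def mtilde {p : ℕ} (χ : ℝ → ℝ) (z : Fin p → ℝ) : ℝ :=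
  if (⨆ j, z j) = (⨅ j, z j) then (⨆ j, z j)
  else ((⨆ j, z j) + (⨅ j, z j)) / 2 +
    ((⨆ j, z j) - (⨅ j, z j)) / 2 *
      χ (((⨆ j, z j) + (⨅ j, z j)) / ((⨆ j, z j) - (⨅ j, z j)))

lemma my_ciSup_add {p : ℕ} [Nonempty (Fin p)] (z : Fin p → ℝ) (s : ℝ) :
    (⨆ j, (z j + s)) = (⨆ j, z j) + s := by
  apply le_antisymm
  · exact ciSup_le fun j => add_le_add_left (le_ciSup (Set.finite_range z).bddAbove j) s
  · have h : (⨆ j, z j) ≤ (⨆ j, z j + s) - s := ciSup_le fun j => by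
      have := le_ciSup (Set.finite_range fun j => z j + s).bddAbove j
      linarith
    linarith

lemma my_ciInf_add {p : ℕ} [Nonempty (Fin p)] (z : Fin p → ℝ) (s : ℝ) :
    (⨅ j, (z j + s)) = (⨅ j, z j) + s := by
  apply le_antisymm
  · have h : (⨅ j, z j + s) - s ≤ (⨅ j, z j) := le_ciInf fun j => by
      have := ciInf_le (Set.finite_range fun j => z j + s).bddBelow j
      linarith
    linarith
  · exact le_ciInf fun j => add_le_add_left (ciInf_le (Set.finite_range z).bddBelow j) s

/-- Along diagonal shifts, `s ↦ m̃_p(z₁+s, …, z_p+s)` is differentiable with derivative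
in `[1, 3]`. -/
theorem stmt_7 (p : ℕ) (hp : 1 ≤ p) (χ : ℝ → ℝ)
    (hχodd : ∀ s : ℝ, χ (-s) = -χ s) (hχdiff : Differentiable ℝ χ)
    (hχm : ∀ s : ℝ, s ≤ -1 → χ s = -1) (hχp : ∀ s : ℝ, 1 ≤ s → χ s = 1)
    (hχ'nonneg : ∀ s : ℝ, 0 ≤ deriv χ s) (hχ'le : ∀ s : ℝ, deriv χ s ≤ 2)
    (hχle : ∀ s : ℝ, -1 ≤ s → s ≤ 0 → χ s ≤ s)
    (hχge : ∀ s : ℝ, 0 ≤ s → s ≤ 1 → s ≤ χ s)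
    (z : Fin p → ℝ) :
    Differentiable ℝ (fun s : ℝ => mtilde χ (fun j => z j + s)) ∧
    ∀ s : ℝ, 1 ≤ deriv (fun s : ℝ => mtilde χ (fun j => z j + s)) s ∧
      deriv (fun s : ℝ => mtilde χ (fun j => z j + s)) s ≤ 3 := by
  haveI : Nonempty (Fin p) := Fin.pos_iff_nonempty.mp hp
  set M : ℝ := ⨆ j, z j with hM
  set m : ℝ := ⨅ j, z j with hm
  by_cases hMm : M = m
  · have hf : (fun s : ℝ => mtilde χ (fun j => z j + s)) = fun s => M + s := by
      funext s
      simp only [mtilde, my_ciSup_add, my_ciInf_add, ← hM, ← hm, hMm, if_pos rfl]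
      simp [hMm]
    rw [hf]
    have hd : ∀ s : ℝ, HasDerivAt (fun s : ℝ => M + s) 1 s := fun s =>
      (hasDerivAt_id s).const_add M
    refine ⟨fun s => (hd s).differentiableAt, fun s => ?_⟩
    rw [(hd s).deriv]
    norm_num
  · have hdne : M - m ≠ 0 := sub_ne_zero.mpr hMm
    have hf : (fun s : ℝ => mtilde χ (fun j => z j + s)) =
        fun s => (M + m + 2 * s) / 2 + (M - m) / 2 * χ ((M + m + 2 * s) / (M - m)) := by
      funext s
      have h1 : (M + s) + (m + s) = M + m + 2 * s := by ring
      have h2 : (M + s) - (m + s) = M - m := by ring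
      have hne : ¬ (M + s = m + s) := fun h => hMm (by linarith)
      simp only [mtilde, my_ciSup_add, my_ciInf_add, ← hM, ← hm, if_neg hne, h1, h2]
    have key : ∀ s : ℝ,
        HasDerivAt (fun s => (M + m + 2 * s) / 2 + (M - m) / 2 * χ ((M + m + 2 * s) / (M - m)))
          (1 + deriv χ ((M + m + 2 * s) / (M - m))) s := by
      intro s
      have h1 : HasDerivAt (fun s : ℝ => (M + m + 2 * s) / (M - m)) (2 / (M - m)) s := by
        have := (((hasDerivAt_id s).const_mul 2).const_add (M + m)).div_const (M - m)
        simpa using this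
      have h2 : HasDerivAt (fun s : ℝ => χ ((M + m + 2 * s) / (M - m)))
          (deriv χ ((M + m + 2 * s) / (M - m)) * (2 / (M - m))) s :=
        ((hχdiff _).hasDerivAt).comp s h1
      have h3 : HasDerivAt (fun s : ℝ => (M + m + 2 * s) / 2) 1 s := by
        have := (((hasDerivAt_id s).const_mul 2).const_add (M + m)).div_const 2
        simpa using this
      have h4 := h3.add (h2.const_mul ((M - m) / 2))
      refine h4.congr_deriv ?_
      have e : (M - m) / 2 * (2 / (M - m)) = 1 := by field_simp
      linear_combination (deriv χ ((M + m + 2 * s) / (M - m)) : ℝ) * e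
    rw [hf]
    refine ⟨fun s => (key s).differentiableAt, fun s => ?_⟩
    rw [(key s).deriv]
    have := hχ'nonneg ((M + m + 2 * s) / (M - m))
    have := hχ'le ((M + m + 2 * s) / (M - m))
    constructor <;> linarith
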